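/- The greedy matrix A(n) is symmetric: a_{ij} = a_{ji} for all i, j ≥ 1. -/
import Mathlib


/-- Number of ones in row `k` strictly to the left of column `l` (columns `1..l-1`). -/
def rowOnes (a : ℕ → ℕ → Bool) (k l : ℕ) : ℕ :=
  ((Finset.Ico 1 l).filter (fun j => a k j = true)).card

/-- Number of ones in column `l` strictly above row `k` (rows `1..k-1`). -/
def colOnes (a : ℕ → ℕ → Bool) (k l : ℕ) : ℕ :=
  ((Finset.Ico 1 k).filter (fun i => a i l = true)).card

/-- The greedy (first-choice) matrix `A(n)`: entries are placed row by row, left to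
right; a one is placed at `(k,l)` unless the row already has `n+1` ones to the left,
the column already has `n+1` ones above, or a rectangle of ones would be created. -/
def IsGreedy (n : ℕ) (a : ℕ → ℕ → Bool) : Prop :=
  (∀ i j, i = 0 ∨ j = 0 → a i j = false) ∧
  ∀ k l, 1 ≤ k → 1 ≤ l →
    (a k l = true ↔
      rowOnes a k l < n + 1 ∧ colOnes a k l < n + 1 ∧
      ¬ ∃ i j, 1 ≤ i ∧ i < k ∧ 1 ≤ j ∧ j < l ∧
        a i j = true ∧ a i l = true ∧ a k j = true)

/-- Theorem 3.2: the greedy matrix `A(n)` is symmetric. -/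
theorem stmt5 (n : ℕ) (a : ℕ → ℕ → Bool) (h : IsGreedy n a) (i j : ℕ)
    (hi : 1 ≤ i) (hj : 1 ≤ j) : a i j = a j i := by
  obtain ⟨h0, hg⟩ := h
  suffices H : ∀ s i j, i + j ≤ s → 1 ≤ i → 1 ≤ j → a i j = a j i from
    H (i + j) i j le_rfl hi hj
  intro s
  induction s with
  | zero => intro i j hij hi hj; omega
  | succ s ih =>
    intro i j hij hi hj
    rcases Nat.lt_or_ge (i + j) (s + 1) with hlt | hge
    · exact ih i j (by omega) hi hj
    have hs : i + j = s + 1 := le_antisymm hij hge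
    have hrow : rowOnes a j i = colOnes a i j := by
      unfold rowOnes colOnes
      congr 1
      apply Finset.filter_congr
      intro t ht
      simp only [Finset.mem_Ico] at ht
      rw [ih j t (by omega) hj (by omega)]
    have hcol : colOnes a j i = rowOnes a i j := by
      unfold rowOnes colOnes
      congr 1
      apply Finset.filter_congr
      intro t ht
      simp only [Finset.mem_Ico] at ht
      rw [ih t i (by omega) (by omega) hi]
    have hrect :
        (∃ p q, 1 ≤ p ∧ p < j ∧ 1 ≤ q ∧ q < i ∧
          a p q = true ∧ a p i = true ∧ a j q = true) ↔
        (∃ p q, 1 ≤ p ∧ p < i ∧ 1 ≤ q ∧ q < j ∧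
          a p q = true ∧ a p j = true ∧ a i q = true) := by
      constructor
      · rintro ⟨p, q, hp1, hpj, hq1, hqi, h1, h2, h3⟩
        refine ⟨q, p, hq1, hqi, hp1, hpj, ?_, ?_, ?_⟩
        · rw [← ih p q (by omega) hp1 hq1]; exact h1
        · rw [← ih j q (by omega) hj hq1]; exact h3
        · rw [← ih p i (by omega) hp1 hi]; exact h2
      · rintro ⟨p, q, hp1, hpi, hq1, hqj, h1, h2, h3⟩
        refine ⟨q, p, hq1, hqj, hp1, hpi, ?_, ?_, ?_⟩
        · rw [ih q p (by omega) hq1 hp1]; exact h1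
        · rw [ih q i (by omega) hq1 hi]; exact h3
        · rw [← ih p j (by omega) hp1 hj]; exact h2
    have hiff : (a i j = true) ↔ (a j i = true) := by
      rw [hg i j hi hj, hg j i hj hi, hrow, hcol, hrect]
      tauto
    exact Bool.coe_iff_coe.mp hiff
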